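/- arXiv:1303.6815 — 3 statements merged into one kernel-verified Lean document; each statement's English description precedes it below -/
import Mathlib

section
/- Let P be a δε-chain and R_P the associated bubble-sort chain of adjacent-swap reflections reversing P, acting on h* where odd swaps act by the odd-reflection rule on weights (r_α(λ) = λ if ⟨λ,α⟩ = 0, λ − α otherwise) and even swaps act by the usual linear reflection. Let R_P′ be the operator obtained from R_P by dropping all odd reflections. Then R_P = R_P′ as operators on h* if and only if the type-string of P (the word in {δ, ε} obtained by forgetting indices) is a palindrome. -/
noncomputable section

/-- The weight `δ_i` (for `Sum.inl i`) resp. `ε_j` (for `Sum.inr j`) of `gl(m|n)`. -/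
def wtS (m n : ℕ) (a : Fin m ⊕ Fin n) : (Fin m ⊕ Fin n) → ℝ := Pi.single a 1

/-- The invariant form of signature `(m, n)`. -/
def wformS (m n : ℕ) (v w : (Fin m ⊕ Fin n) → ℝ) : ℝ :=
  (∑ i : Fin m, v (Sum.inl i) * w (Sum.inl i)) -
    ∑ j : Fin n, v (Sum.inr j) * w (Sum.inr j)

/-- Even reflection at an anisotropic root. -/
def evenReflS (m n : ℕ) (α μ : (Fin m ⊕ Fin n) → ℝ) : (Fin m ⊕ Fin n) → ℝ :=
  μ - (2 * wformS m n α μ / wformS m n α α) • α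

/-- Odd reflection on weights: `r_α(λ) = λ` if `⟨λ,α⟩ = 0`, `λ − α` otherwise. -/
def oddReflS (m n : ℕ) (α μ : (Fin m ⊕ Fin n) → ℝ) : (Fin m ⊕ Fin n) → ℝ :=
  if wformS m n α μ = 0 then μ else μ - α

/-- The reflection attached to a swap of the symbols `a`, `b`: even (linear) if they
are of the same type, odd otherwise. -/
def swapReflS (m n : ℕ) (a b : Fin m ⊕ Fin n) (μ : (Fin m ⊕ Fin n) → ℝ) :
    (Fin m ⊕ Fin n) → ℝ :=
  if a.isLeft = b.isLeft then evenReflS m n (wtS m n a - wtS m n b) μ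
  else oddReflS m n (wtS m n a - wtS m n b) μ

/-- The bubble-sort pattern of adjacent transpositions reversing positions `l,…,r`. -/
def bubblePat (l r : ℕ) (b : Bool) : List (ℕ × ℕ) :=
  if _h : l < r then
    if b then ((List.range (r - l)).map fun k => (l, l + k + 1)) ++ bubblePat (l + 1) r false
    else ((List.range (r - l)).map fun k => (r - 1 - k, r)) ++ bubblePat l (r - 1) true
  else []
termination_by r - l
decreasing_by all_goals omega

/-- The operator `R_P` on `h*`: the bubble-sort chain of reflections reversing the
δε-chain `C`, applied in order, with odd swaps acting by the odd-reflection rule. -/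
def RPchain (m n : ℕ) (C : ℕ → Fin m ⊕ Fin n) (μ : (Fin m ⊕ Fin n) → ℝ) :
    (Fin m ⊕ Fin n) → ℝ :=
  (bubblePat 0 (m + n - 1) true).foldl (fun ν p => swapReflS m n (C p.1) (C p.2) ν) μ

/-- The operator `R_P'`: the same chain with all odd reflections dropped. -/
def RPchainEven (m n : ℕ) (C : ℕ → Fin m ⊕ Fin n) (μ : (Fin m ⊕ Fin n) → ℝ) :
    (Fin m ⊕ Fin n) → ℝ :=
  (bubblePat 0 (m + n - 1) true).foldl
    (fun ν p =>
      if (C p.1).isLeft = (C p.2).isLeft then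
        evenReflS m n (wtS m n (C p.1) - wtS m n (C p.2)) ν
      else ν)
    μ

namespace Stmt9Aux

variable {m n : ℕ}

lemma wformS_sub (u v w : (Fin m ⊕ Fin n) → ℝ) :
    wformS m n (u - v) w = wformS m n u w - wformS m n v w := by
  simp only [wformS, Pi.sub_apply, sub_mul, Finset.sum_sub_distrib]
  ring

lemma wformS_wt (a : Fin m ⊕ Fin n) (w : (Fin m ⊕ Fin n) → ℝ) :
    wformS m n (wtS m n a) w = if a.isLeft then w a else - w a := by
  cases a with
  | inl i => simp [wformS, wtS, Pi.single_apply, ite_mul, Finset.sum_ite_eq']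
  | inr j => simp [wformS, wtS, Pi.single_apply, ite_mul, Finset.sum_ite_eq']

lemma wtS_apply (a x : Fin m ⊕ Fin n) : wtS m n a x = if x = a then 1 else 0 := by
  simp [wtS, Pi.single_apply]


/-- The coordinate transposition operator. -/
def swapC (a b : Fin m ⊕ Fin n) (μ : (Fin m ⊕ Fin n) → ℝ) : (Fin m ⊕ Fin n) → ℝ :=
  fun x => if x = a then μ b else if x = b then μ a else μ x

lemma swapRefl_even (a b : Fin m ⊕ Fin n) (hab : a ≠ b) (ht : a.isLeft = b.isLeft)
    (μ : (Fin m ⊕ Fin n) → ℝ) : swapReflS m n a b μ = swapC a b μ := by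
  rw [swapReflS, if_pos ht]
  have hba : ¬ b = a := fun h => hab h.symm
  have hNum : wformS m n (wtS m n a - wtS m n b) μ
      = (if a.isLeft then (1:ℝ) else -1) * (μ a - μ b) := by
    rw [wformS_sub, wformS_wt, wformS_wt, ← ht]
    cases a.isLeft <;> simp <;> ring
  have hDen : wformS m n (wtS m n a - wtS m n b) (wtS m n a - wtS m n b)
      = (if a.isLeft then (1:ℝ) else -1) * 2 := by
    rw [wformS_sub, wformS_wt, wformS_wt, ← ht]
    cases a.isLeft <;> simp [Pi.sub_apply, wtS_apply, hab, hba] <;> ring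
  funext x
  simp only [evenReflS, Pi.sub_apply, Pi.smul_apply, smul_eq_mul, swapC, hNum, hDen, wtS_apply]
  by_cases hxa : x = a
  · have hxb : ¬ x = b := by rw [hxa]; exact hab
    cases hA : a.isLeft <;> simp [hxa, hxb, hA, hab, hba] <;> ring
  · by_cases hxb : x = b
    · cases hA : a.isLeft <;> simp [hxa, hxb, hA, hab, hba] <;> ring
    · cases hA : a.isLeft <;> simp [hxa, hxb, hA, hab, hba]

lemma swapRefl_odd (a b : Fin m ⊕ Fin n) (ht : a.isLeft ≠ b.isLeft)
    (μ : (Fin m ⊕ Fin n) → ℝ) : swapReflS m n a b μ =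
      if μ a + μ b = 0 then μ
      else fun x => if x = a then μ a - 1 else if x = b then μ b + 1 else μ x := by
  have hab : a ≠ b := fun h => ht (by rw [h])
  rw [swapReflS, if_neg ht, oddReflS]
  have hcond : (wformS m n (wtS m n a - wtS m n b) μ = 0) ↔ μ a + μ b = 0 := by
    rw [wformS_sub, wformS_wt, wformS_wt]
    cases hA : a.isLeft <;> cases hB : b.isLeft <;> simp_all <;> constructor <;>
      intro h <;> linarith
  by_cases hc : μ a + μ b = 0
  · rw [if_pos (hcond.mpr hc), if_pos hc]
  · rw [if_neg (fun h => hc (hcond.mp h)), if_neg hc]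
    funext x
    simp only [Pi.sub_apply, wtS_apply]
    by_cases hxa : x = a
    · have hxb : ¬ x = b := by rw [hxa]; exact hab
      have hba : ¬ b = a := fun h => hab h.symm
      simp [hxa, hxb, hab, hba]
    · by_cases hxb : x = b
      · have hba : ¬ b = a := fun h => hab h.symm
        simp [hxa, hxb, hab, hba]
      · simp [hxa, hxb]

lemma swapRefl_self (a : Fin m ⊕ Fin n) (μ : (Fin m ⊕ Fin n) → ℝ) :
    swapReflS m n a a μ = μ := by
  simp [swapReflS, evenReflS, sub_self, smul_zero]

lemma swapRefl_other (a b x : Fin m ⊕ Fin n) (μ : (Fin m ⊕ Fin n) → ℝ)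
    (h1 : x ≠ a) (h2 : x ≠ b) : swapReflS m n a b μ x = μ x := by
  by_cases hab : a = b
  · rw [hab, swapRefl_self]
  · by_cases ht : a.isLeft = b.isLeft
    · rw [swapRefl_even a b hab ht]
      simp [swapC, h1, h2]
    · rw [swapRefl_odd a b ht]
      split_ifs with h
      · rfl
      · simp only [if_neg h1, if_neg h2]

/-- The odd/even fold step. -/
def Fstep (m n : ℕ) (C : ℕ → Fin m ⊕ Fin n) :
    ((Fin m ⊕ Fin n) → ℝ) → ℕ × ℕ → ((Fin m ⊕ Fin n) → ℝ) :=
  fun ν p => swapReflS m n (C p.1) (C p.2) ν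

/-- The even-only fold step. -/
def Gstep (m n : ℕ) (C : ℕ → Fin m ⊕ Fin n) :
    ((Fin m ⊕ Fin n) → ℝ) → ℕ × ℕ → ((Fin m ⊕ Fin n) → ℝ) :=
  fun ν p =>
    if (C p.1).isLeft = (C p.2).isLeft then
      evenReflS m n (wtS m n (C p.1) - wtS m n (C p.2)) ν
    else ν

variable {C : ℕ → Fin m ⊕ Fin n}

lemma foldF_untouched (P : List (ℕ × ℕ)) (μ : (Fin m ⊕ Fin n) → ℝ) (x : Fin m ⊕ Fin n)
    (h : ∀ p ∈ P, x ≠ C p.1 ∧ x ≠ C p.2) :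
    P.foldl (Fstep m n C) μ x = μ x := by
  induction P generalizing μ with
  | nil => rfl
  | cons p P ih =>
      rw [List.foldl_cons, ih _ (fun q hq => h q (List.mem_cons_of_mem p hq))]
      exact swapRefl_other _ _ _ _ (h p ((List.mem_cons_self : p ∈ p :: P))).1
        (h p ((List.mem_cons_self : p ∈ p :: P))).2

lemma foldF_zero (P : List (ℕ × ℕ)) (μ : (Fin m ⊕ Fin n) → ℝ)
    (h : ∀ p ∈ P, μ (C p.1) = 0 ∧ μ (C p.2) = 0) :
    P.foldl (Fstep m n C) μ = μ := by
  induction P with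
  | nil => rfl
  | cons p P ih =>
      have hstep : Fstep m n C μ p = μ := by
        rw [Fstep]
        by_cases hab : C p.1 = C p.2
        · rw [hab, swapRefl_self]
        · by_cases ht : (C p.1).isLeft = (C p.2).isLeft
          · rw [swapRefl_even _ _ hab ht]
            funext x
            rw [swapC]
            split_ifs with h1 h2
            · rw [h1, (h p ((List.mem_cons_self : p ∈ p :: P))).1, (h p ((List.mem_cons_self : p ∈ p :: P))).2]
            · rw [h2, (h p ((List.mem_cons_self : p ∈ p :: P))).1, (h p ((List.mem_cons_self : p ∈ p :: P))).2]
            · rfl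
          · rw [swapRefl_odd _ _ ht, if_pos]
            rw [(h p ((List.mem_cons_self : p ∈ p :: P))).1, (h p ((List.mem_cons_self : p ∈ p :: P))).2, add_zero]
      rw [List.foldl_cons, hstep, ih (fun q hq => h q (List.mem_cons_of_mem p hq))]

lemma foldG_range (P : List (ℕ × ℕ)) (μ : (Fin m ⊕ Fin n) → ℝ) (x : Fin m ⊕ Fin n) :
    ∃ y, P.foldl (Gstep m n C) μ x = μ y := by
  induction P generalizing μ with
  | nil => exact ⟨x, rfl⟩
  | cons p P ih =>
      rw [List.foldl_cons]
      obtain ⟨y, hy⟩ := ih (Gstep m n C μ p)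
      rw [hy]
      rw [Gstep]
      by_cases ht : (C p.1).isLeft = (C p.2).isLeft
      · rw [if_pos ht]
        by_cases hab : C p.1 = C p.2
        · refine ⟨y, ?_⟩
          have : swapReflS m n (C p.1) (C p.2) μ = μ := by rw [hab, swapRefl_self]
          have h2 : evenReflS m n (wtS m n (C p.1) - wtS m n (C p.2)) μ = μ := by
            rw [swapReflS, if_pos ht] at this; exact this
          rw [h2]
        · have h2 : evenReflS m n (wtS m n (C p.1) - wtS m n (C p.2)) μ = swapC (C p.1) (C p.2) μ := by
            rw [← swapRefl_even _ _ hab ht, swapReflS, if_pos ht]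
          rw [h2, swapC]
          split_ifs
          · exact ⟨C p.2, rfl⟩
          · exact ⟨C p.1, rfl⟩
          · exact ⟨y, rfl⟩
      · rw [if_neg ht]; exact ⟨y, rfl⟩

/-- The two-row bubble pattern with endpoints `a`, `r` and middle index list `I`. -/
def pat2 (a r : ℕ) (I : List ℕ) : List (ℕ × ℕ) :=
  I.map (fun i => (a, i)) ++ (a, r) :: (I.reverse.map fun i => (i, r))

lemma pat2_cons (a r c : ℕ) (I : List ℕ) :
    pat2 a r (c :: I) = (a, c) :: (pat2 a r I ++ [(c, r)]) := by
  simp [pat2]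

lemma pat2_mem (a r : ℕ) (I : List ℕ) (p : ℕ × ℕ) (hp : p ∈ pat2 a r I) :
    (∃ i ∈ I, p = (a, i)) ∨ p = (a, r) ∨ (∃ i ∈ I, p = (i, r)) := by
  simp only [pat2, List.mem_append, List.mem_cons, List.mem_map, List.mem_reverse] at hp
  rcases hp with ⟨i, hi, rfl⟩ | rfl | ⟨i, hi, rfl⟩
  · exact Or.inl ⟨i, hi, rfl⟩
  · exact Or.inr (Or.inl rfl)
  · exact Or.inr (Or.inr ⟨i, hi, rfl⟩)

/-- The middle index list `l+1, …, r-1`. -/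
def IL (l r : ℕ) : List ℕ := (List.range (r - 1 - l)).map fun k => l + 1 + k

lemma IL_mem (l r i : ℕ) (h : i ∈ IL l r) : l + 1 ≤ i ∧ i ≤ r - 1 := by
  simp only [IL, List.mem_map, List.mem_range] at h
  obtain ⟨k, hk, rfl⟩ := h
  omega

lemma rowA_eq (l r : ℕ) (h : l < r) :
    ((List.range (r - l)).map fun k => (l, l + k + 1))
      = (IL l r).map (fun i => (l, i)) ++ [(l, r)] := by
  have h1 : r - l = (r - 1 - l) + 1 := by omega
  rw [h1, List.range_succ, List.map_append, IL, List.map_map]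
  congr 1
  · apply List.map_congr_left
    intro k _
    simp only [Function.comp_apply]
    congr 1
    omega
  · simp only [List.map_cons, List.map_nil]
    congr 2
    omega

lemma rowB_eq (l r : ℕ) (h : l < r) :
    ((List.range (r - (l + 1))).map fun k => (r - 1 - k, r))
      = (IL l r).reverse.map (fun i => (i, r)) := by
  apply List.ext_getElem
  · simp [IL]; omega
  · intro k h1 h2
    simp only [List.length_map, List.length_range] at h1
    simp only [List.getElem_map, List.getElem_range]
    rw [List.getElem_reverse]
    simp only [IL, List.getElem_map, List.getElem_range, List.length_map, List.length_range,
      List.length_reverse]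
    congr 1
    omega

lemma bubble_decomp (l r : ℕ) (h : l < r) :
    bubblePat l r true = pat2 l r (IL l r) ++ bubblePat (l + 1) (r - 1) true := by
  rw [bubblePat]
  rw [dif_pos h, if_pos rfl]
  rw [rowA_eq l r h]
  by_cases h2 : l + 1 < r
  · rw [bubblePat]
    rw [dif_pos h2, if_neg (by simp)]
    rw [rowB_eq l r h, pat2]
    simp [List.append_assoc]
  · have hr : r = l + 1 := by omega
    have e1 : bubblePat (l + 1) r false = [] := by rw [bubblePat]; simp [h2]
    have e2 : bubblePat (l + 1) (r - 1) true = [] := by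
      rw [bubblePat]; simp [show ¬ (l + 1 < r - 1) by omega]
    have e3 : IL l r = [] := by simp [IL, show r - 1 - l = 0 by omega]
    rw [e1, e2, e3, pat2]
    simp

lemma bubble_mem : ∀ (s l r : ℕ) (b : Bool) (p : ℕ × ℕ), r - l ≤ s →
    p ∈ bubblePat l r b → l ≤ p.1 ∧ p.1 < p.2 ∧ p.2 ≤ r := by
  intro s
  induction s with
  | zero =>
      intro l r b p hs hp
      rw [bubblePat] at hp
      rw [dif_neg (by omega)] at hp
      simp at hp
  | succ s ih =>
      intro l r b p hs hp
      rw [bubblePat] at hp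
      by_cases h : l < r
      · rw [dif_pos h] at hp
        cases b with
        | true =>
            rw [if_pos rfl] at hp
            rcases List.mem_append.mp hp with h1 | h1
            · simp only [List.mem_map, List.mem_range] at h1
              obtain ⟨k, hk, rfl⟩ := h1
              simp; omega
            · have := ih (l + 1) r false p (by omega) h1
              omega
        | false =>
            rw [if_neg (by simp)] at hp
            rcases List.mem_append.mp hp with h1 | h1
            · simp only [List.mem_map, List.mem_range] at h1
              obtain ⟨k, hk, rfl⟩ := h1
              simp; omega
            · have := ih l (r - 1) true p (by omega) h1
              omega
      · rw [dif_neg h] at hp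
        simp at hp

lemma evenRefl_swapC (a b : Fin m ⊕ Fin n) (hab : a ≠ b) (ht : a.isLeft = b.isLeft)
    (μ : (Fin m ⊕ Fin n) → ℝ) :
    evenReflS m n (wtS m n a - wtS m n b) μ = swapC a b μ := by
  have h := swapRefl_even a b hab ht μ
  rwa [swapReflS, if_pos ht] at h

lemma tworowF (a r : ℕ) (I : List ℕ) (ht : (C a).isLeft = (C r).isLeft)
    (hab : C a ≠ C r) (hI : ∀ i ∈ I, C i ≠ C a ∧ C i ≠ C r) (μ : (Fin m ⊕ Fin n) → ℝ) :
    (pat2 a r I).foldl (Fstep m n C) μ = swapC (C a) (C r) μ := by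
  induction I generalizing μ with
  | nil =>
      simp only [pat2, List.map_nil, List.reverse_nil, List.nil_append, List.foldl_cons,
        List.foldl_nil, Fstep]
      exact swapRefl_even (C a) (C r) hab ht μ
  | cons c I ih =>
      rw [pat2_cons, List.foldl_cons, List.foldl_append]
      rw [ih (fun i hi => hI i (List.mem_cons_of_mem c hi))]
      simp only [List.foldl_cons, List.foldl_nil]
      obtain ⟨hca, hcr⟩ := hI c ((List.mem_cons_self : c ∈ c :: I))
      have hra : C r ≠ C a := Ne.symm hab
      by_cases hc : (C c).isLeft = (C a).isLeft
      · simp only [Fstep]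
        rw [swapRefl_even (C a) (C c) (Ne.symm hca) hc.symm,
            swapRefl_even (C c) (C r) hcr (hc.trans ht)]
        funext x
        simp only [swapC]
        split_ifs <;> simp_all
      · simp only [Fstep]
        rw [swapRefl_odd (C a) (C c) (fun h => hc h.symm)]
        have htcr : (C c).isLeft ≠ (C r).isLeft := fun h => hc (h.trans ht.symm)
        by_cases h0 : μ (C a) + μ (C c) = 0
        · rw [if_pos h0, swapRefl_odd (C c) (C r) htcr, if_pos (by
            simp [swapC, hca, hcr, hra]
            linarith)]
        · rw [if_neg h0, swapRefl_odd (C c) (C r) htcr, if_neg (by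
            simp [swapC, hca, hcr, hra]
            intro hcontra
            apply h0
            linarith)]
          funext x
          simp only [swapC]
          split_ifs <;> simp_all <;> ring
  
lemma tworowG (a r : ℕ) (I : List ℕ) (ht : (C a).isLeft = (C r).isLeft)
    (hab : C a ≠ C r) (hI : ∀ i ∈ I, C i ≠ C a ∧ C i ≠ C r) (μ : (Fin m ⊕ Fin n) → ℝ) :
    (pat2 a r I).foldl (Gstep m n C) μ = swapC (C a) (C r) μ := by
  induction I generalizing μ with
  | nil =>
      simp only [pat2, List.map_nil, List.reverse_nil, List.nil_append, List.foldl_cons,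
        List.foldl_nil, Gstep]
      rw [if_pos ht]
      exact evenRefl_swapC (C a) (C r) hab ht μ
  | cons c I ih =>
      rw [pat2_cons, List.foldl_cons, List.foldl_append]
      rw [ih (fun i hi => hI i (List.mem_cons_of_mem c hi))]
      simp only [List.foldl_cons, List.foldl_nil]
      obtain ⟨hca, hcr⟩ := hI c ((List.mem_cons_self : c ∈ c :: I))
      by_cases hc : (C c).isLeft = (C a).isLeft
      · simp only [Gstep]
        rw [if_pos (hc.trans ht), if_pos hc.symm]
        rw [evenRefl_swapC (C a) (C c) (Ne.symm hca) hc.symm,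
            evenRefl_swapC (C c) (C r) hcr (hc.trans ht)]
        funext x
        simp only [swapC]
        split_ifs <;> simp_all
      · simp only [Gstep]
        rw [if_neg (fun h => hc (h.trans ht.symm)), if_neg (fun h => hc h.symm)]

lemma bool_helper : ∀ a b c : Bool, a ≠ c → c ≠ b → a = b := by decide

lemma swapC_invol (a b : Fin m ⊕ Fin n) (hab : a ≠ b) (μ : (Fin m ⊕ Fin n) → ℝ) :
    swapC a b (swapC a b μ) = μ := by
  funext x
  simp only [swapC]
  split_ifs <;> simp_all

lemma main_pal : ∀ (s l r : ℕ), r - l ≤ s →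
    (∀ i j, l ≤ i → i ≤ r → l ≤ j → j ≤ r → C i = C j → i = j) →
    (∀ i, l ≤ i → i ≤ r → (C i).isLeft = (C (l + r - i)).isLeft) →
    ∀ μ : (Fin m ⊕ Fin n) → ℝ,
      (bubblePat l r true).foldl (Fstep m n C) μ
        = (bubblePat l r true).foldl (Gstep m n C) μ := by
  intro s
  induction s with
  | zero =>
      intro l r hs hinj hpal μ
      rw [bubblePat, dif_neg (by omega)]
      rfl
  | succ s ih =>
      intro l r hs hinj hpal μ
      by_cases hlr : l < r
      · have hpal_l : (C l).isLeft = (C r).isLeft := by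
          have h := hpal l le_rfl (by omega)
          rwa [show l + r - l = r by omega] at h
        have hab : C l ≠ C r := fun h => by
          have := hinj l r le_rfl (by omega) (by omega) le_rfl h; omega
        have hI : ∀ i ∈ IL l r, C i ≠ C l ∧ C i ≠ C r := by
          intro i hi
          obtain ⟨h1, h2⟩ := IL_mem l r i hi
          constructor
          · intro h; have := hinj i l (by omega) (by omega) le_rfl (by omega) h; omega
          · intro h; have := hinj i r (by omega) (by omega) (by omega) le_rfl h; omega
        rw [bubble_decomp l r hlr, List.foldl_append, List.foldl_append,
            tworowF l r _ hpal_l hab hI, tworowG l r _ hpal_l hab hI]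
        exact ih (l+1) (r-1) (by omega)
          (fun i j h1 h2 h3 h4 h => hinj i j (by omega) (by omega) (by omega) (by omega) h)
          (fun i h1 h2 => by
            have h := hpal i (by omega) (by omega)
            rwa [show l + r - i = (l+1) + (r-1) - i by omega] at h) _
      · rw [bubblePat, dif_neg hlr]
        rfl

lemma main_nonpal : ∀ (s l r : ℕ), r - l ≤ s →
    (∀ i j, l ≤ i → i ≤ r → l ≤ j → j ≤ r → C i = C j → i = j) →
    ∀ i0, l ≤ i0 → i0 ≤ r → (C i0).isLeft ≠ (C (l + r - i0)).isLeft →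
    ∃ μ : (Fin m ⊕ Fin n) → ℝ,
      (bubblePat l r true).foldl (Fstep m n C) μ
        ≠ (bubblePat l r true).foldl (Gstep m n C) μ := by
  intro s
  induction s with
  | zero =>
      intro l r hs hinj i0 hi1 hi2 hv
      exfalso; apply hv
      rw [show l + r - i0 = i0 by omega]
  | succ s ih =>
      intro l r hs hinj i0 hi1 hi2 hv
      by_cases hlr : l < r
      swap
      · exfalso; apply hv
        rw [show l + r - i0 = i0 by omega]
      by_cases hends : (C l).isLeft = (C r).isLeft
      · -- recurse into the inner interval
        have hi0l : i0 ≠ l := by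
          intro h; apply hv
          rw [h, show l + r - l = r by omega]; exact hends
        have hi0r : i0 ≠ r := by
          intro h; apply hv
          rw [h, show l + r - r = l by omega]; exact hends.symm
        have hab : C l ≠ C r := fun h => by
          have := hinj l r le_rfl (by omega) (by omega) le_rfl h; omega
        have hI : ∀ i ∈ IL l r, C i ≠ C l ∧ C i ≠ C r := by
          intro i hi
          obtain ⟨h1, h2⟩ := IL_mem l r i hi
          constructor
          · intro h; have := hinj i l (by omega) (by omega) le_rfl (by omega) h; omega
          · intro h; have := hinj i r (by omega) (by omega) (by omega) le_rfl h; omega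
        obtain ⟨μ', hμ'⟩ := ih (l+1) (r-1) (by omega)
          (fun i j h1 h2 h3 h4 h => hinj i j (by omega) (by omega) (by omega) (by omega) h)
          i0 (by omega) (by omega)
          (by rw [show (l+1) + (r-1) - i0 = l + r - i0 by omega]; exact hv)
        refine ⟨swapC (C l) (C r) μ', ?_⟩
        rw [bubble_decomp l r hlr, List.foldl_append, List.foldl_append,
            tworowF l r _ hends hab hI, tworowG l r _ hends hab hI,
            swapC_invol _ _ hab]
        exact hμ'
      · -- endpoints of different type: explicit witness
        have hab : C l ≠ C r := fun h => hends (by rw [h])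
        set μ0 : (Fin m ⊕ Fin n) → ℝ := fun x => if x = C l then 2 else 0 with hμ0
        have hμ0l : μ0 (C l) = 2 := by rw [hμ0]; simp
        have hμ0r : μ0 (C r) = 0 := by rw [hμ0]; simp [Ne.symm hab]
        have hFval : (bubblePat l r true).foldl (Fstep m n C) μ0 (C r) = 1 := by
          have hinner : ∀ p ∈ bubblePat (l+1) (r-1) true, C r ≠ C p.1 ∧ C r ≠ C p.2 := by
            intro p hp
            have hb := bubble_mem (r - 1 - (l+1)) (l+1) (r-1) true p le_rfl hp
            constructor
            · intro h
              have := hinj r p.1 (by omega) le_rfl (by omega) (by omega) h; omega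
            · intro h
              have := hinj r p.2 (by omega) le_rfl (by omega) (by omega) h; omega
          rw [bubble_decomp l r hlr, List.foldl_append,
              foldF_untouched _ _ _ hinner]
          by_cases hr1 : r = l + 1
          · have hIL : IL l r = [] := by simp [IL, show r - 1 - l = 0 by omega]
            rw [hIL]
            simp only [pat2, List.map_nil, List.reverse_nil, List.nil_append,
              List.foldl_cons, List.foldl_nil, Fstep]
            rw [swapRefl_odd (C l) (C r) hends, if_neg (by rw [hμ0l, hμ0r]; norm_num)]
            simp [Ne.symm hab, hμ0r]
          · -- r ≥ l + 2
            have d1 : C l ≠ C (l+1) := fun h => by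
              have := hinj l (l+1) le_rfl (by omega) (by omega) (by omega) h; omega
            have d2 : C (l+1) ≠ C r := fun h => by
              have := hinj (l+1) r (by omega) (by omega) (by omega) le_rfl h; omega
            have d1' : C (l+1) ≠ C l := Ne.symm d1
            have d2' : C r ≠ C (l+1) := Ne.symm d2
            have hra : C r ≠ C l := Ne.symm hab
            have hμ0l1 : μ0 (C (l+1)) = 0 := by rw [hμ0]; exact if_neg d1'
            set IL2 : List ℕ := (List.range (r - l - 2)).map (fun k => l + 2 + k) with hIL2
            have hIL2mem : ∀ i ∈ IL2, l + 2 ≤ i ∧ i ≤ r - 1 := by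
              intro i hi
              rw [hIL2] at hi
              simp only [List.mem_map, List.mem_range] at hi
              obtain ⟨k, hk, rfl⟩ := hi
              omega
            have hIL2d : ∀ i ∈ IL2, C i ≠ C l ∧ C i ≠ C (l+1) ∧ C i ≠ C r := by
              intro i hi
              obtain ⟨h1, h2⟩ := hIL2mem i hi
              refine ⟨fun h => ?_, fun h => ?_, fun h => ?_⟩
              · have := hinj i l (by omega) (by omega) le_rfl (by omega) h; omega
              · have := hinj i (l+1) (by omega) (by omega) (by omega) (by omega) h; omega
              · have := hinj i r (by omega) (by omega) (by omega) le_rfl h; omega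
            have hILc : IL l r = (l+1) :: IL2 := by
              rw [IL, show r - 1 - l = (r - l - 2) + 1 by omega, List.range_succ_eq_map,
                List.map_cons, List.map_map, hIL2]
              congr 1
              apply List.map_congr_left
              intro k _
              simp only [Function.comp_apply]
              omega
            rw [hILc, pat2_cons, List.foldl_cons, List.foldl_append]
            simp only [List.foldl_cons, List.foldl_nil]
            have hμ0IL2 : ∀ i ∈ IL2, μ0 (C i) = 0 := by
              intro i hi
              rw [hμ0]; exact if_neg (hIL2d i hi).1
            by_cases hc : (C (l+1)).isLeft = (C l).isLeft
            · -- even head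
              have e1 : Fstep m n C μ0 (l, l+1) = swapC (C l) (C (l+1)) μ0 := by
                simp only [Fstep]
                exact swapRefl_even (C l) (C (l+1)) d1 hc.symm μ0
              have hz : ∀ p ∈ pat2 l r IL2,
                  swapC (C l) (C (l+1)) μ0 (C p.1) = 0 ∧ swapC (C l) (C (l+1)) μ0 (C p.2) = 0 := by
                intro p hp
                have key : ∀ j, j = l ∨ j = r ∨ j ∈ IL2 → swapC (C l) (C (l+1)) μ0 (C j) = 0 := by
                  intro j hj
                  rcases hj with rfl | rfl | hj
                  · simp [swapC, hμ0l1]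
                  · simp [swapC, hra, d2', hμ0r]
                  · obtain ⟨e1', e2', _⟩ := hIL2d j hj
                    simp [swapC, e1', e2', hμ0IL2 j hj]
                rcases pat2_mem l r IL2 p hp with ⟨i, hi, rfl⟩ | rfl | ⟨i, hi, rfl⟩
                · exact ⟨key l (Or.inl rfl), key i (Or.inr (Or.inr hi))⟩
                · exact ⟨key l (Or.inl rfl), key r (Or.inr (Or.inl rfl))⟩
                · exact ⟨key i (Or.inr (Or.inr hi)), key r (Or.inr (Or.inl rfl))⟩
              rw [e1, foldF_zero _ _ hz]
              simp only [Fstep]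
              rw [swapRefl_odd (C (l+1)) (C r) (fun h => hends (hc.symm.trans h))]
              have hv1 : swapC (C l) (C (l+1)) μ0 (C (l+1)) = 2 := by
                simp [swapC, d1', hμ0l]
              have hv2 : swapC (C l) (C (l+1)) μ0 (C r) = 0 := by
                simp [swapC, hra, d2', hμ0r]
              rw [if_neg (by rw [hv1, hv2]; norm_num)]
              simp only [if_neg d2', if_pos rfl]
              rw [hv2]; norm_num
            · -- odd head
              have e1 : Fstep m n C μ0 (l, l+1)
                  = fun x => if x = C l then μ0 (C l) - 1
                      else if x = C (l+1) then μ0 (C (l+1)) + 1 else μ0 x := by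
                simp only [Fstep]
                rw [swapRefl_odd (C l) (C (l+1)) (fun h => hc h.symm),
                  if_neg (by rw [hμ0l, hμ0l1]; norm_num)]
              have huntouched : ∀ p ∈ pat2 l r IL2, C (l+1) ≠ C p.1 ∧ C (l+1) ≠ C p.2 := by
                intro p hp
                have key : ∀ j, j = l ∨ j = r ∨ j ∈ IL2 → C (l+1) ≠ C j := by
                  intro j hj
                  rcases hj with rfl | rfl | hj
                  · exact Ne.symm d1
                  · exact d2
                  · exact Ne.symm (hIL2d j hj).2.1
                rcases pat2_mem l r IL2 p hp with ⟨i, hi, rfl⟩ | rfl | ⟨i, hi, rfl⟩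
                · exact ⟨key l (Or.inl rfl), key i (Or.inr (Or.inr hi))⟩
                · exact ⟨key l (Or.inl rfl), key r (Or.inr (Or.inl rfl))⟩
                · exact ⟨key i (Or.inr (Or.inr hi)), key r (Or.inr (Or.inl rfl))⟩
              have heven : (C (l+1)).isLeft = (C r).isLeft :=
                bool_helper _ _ _ hc hends
              have hmid : (pat2 l r IL2).foldl (Fstep m n C)
                  (Fstep m n C μ0 (l, l+1)) (C (l+1)) = 1 := by
                rw [foldF_untouched _ _ _ huntouched]
                simp [e1, d1', hμ0l1]
              have hsw : ∀ ν : (Fin m ⊕ Fin n) → ℝ,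
                  swapC (C (l+1)) (C r) ν (C r) = ν (C (l+1)) := by
                intro ν; simp [swapC, d2']
              simp only [Fstep]
              rw [swapRefl_even (C (l+1)) (C r) d2 heven, hsw]
              exact hmid
        refine ⟨μ0, fun heq => ?_⟩
        obtain ⟨y, hy⟩ := foldG_range (bubblePat l r true) μ0 (C r)
        have h1 : (1:ℝ) = μ0 y := by rw [← hFval, heq, hy]
        have h2 : μ0 y = 2 ∨ μ0 y = 0 := by
          rw [hμ0]; dsimp only; split_ifs
          · exact Or.inl rfl
          · exact Or.inr rfl
        rcases h2 with h | h <;> rw [h] at h1 <;> norm_num at h1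

lemma RPchain_eq (m n : ℕ) (C : ℕ → Fin m ⊕ Fin n) (μ : (Fin m ⊕ Fin n) → ℝ) :
    RPchain m n C μ = (bubblePat 0 (m + n - 1) true).foldl (Fstep m n C) μ := rfl

lemma RPchainEven_eq (m n : ℕ) (C : ℕ → Fin m ⊕ Fin n) (μ : (Fin m ⊕ Fin n) → ℝ) :
    RPchainEven m n C μ = (bubblePat 0 (m + n - 1) true).foldl (Gstep m n C) μ := rfl

end Stmt9Aux

/-- `R_P = R_P'` as operators on `h*` if and only if the type-string of
the δε-chain `P` is a palindrome. -/
theorem stmt9 (m n : ℕ) (C : ℕ → Fin m ⊕ Fin n)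
    (hC : Set.BijOn C (Set.Iio (m + n)) Set.univ) :
    (∀ μ : (Fin m ⊕ Fin n) → ℝ, RPchain m n C μ = RPchainEven m n C μ) ↔
      (∀ i < m + n, (C i).isLeft = (C (m + n - 1 - i)).isLeft) := by
  have hinj : ∀ i j, 0 ≤ i → i ≤ m + n - 1 → 0 ≤ j → j ≤ m + n - 1 → C i = C j → i = j := by
    intro i j _ h2 _ h4 h
    by_cases hN : m + n = 0
    · omega
    · exact hC.injOn (Set.mem_Iio.mpr (by omega)) (Set.mem_Iio.mpr (by omega)) h
  constructor
  · intro h i hi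
    by_contra hne
    obtain ⟨μ, hμ⟩ := Stmt9Aux.main_nonpal (m + n) 0 (m + n - 1) (by omega) hinj i
      (by omega) (by omega)
      (by rw [show 0 + (m + n - 1) - i = m + n - 1 - i by omega]; exact hne)
    apply hμ
    rw [← Stmt9Aux.RPchain_eq, ← Stmt9Aux.RPchainEven_eq]
    exact h μ
  · intro h μ
    rw [Stmt9Aux.RPchain_eq, Stmt9Aux.RPchainEven_eq]
    refine Stmt9Aux.main_pal (m + n) 0 (m + n - 1) (by omega) hinj (fun i h1 h2 => ?_) μ
    by_cases hN : m + n = 0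
    · have hi0 : i = 0 := by omega
      have hidx : 0 + (m + n - 1) - i = i := by omega
      rw [hidx]
    · have := h i (by omega)
      rwa [show 0 + (m + n - 1) - i = m + n - 1 - i by omega]
end
end

section
/- In the setting of δε-chains with odd and even reflections acting on weights: the composition of the two odd reflections r_{ε−δ} ∘ r_{δ−ε} is the identity on weights, and more generally r_{ε−δ₁} ∘ r_{δ₁−δ₂} ∘ ⋯ ∘ r_{δ_{k−1}−δ_k} ∘ r_{δ_k−ε} = r_{δ₁−δ₂} ∘ ⋯ ∘ r_{δ_{k−1}−δ_k}, i.e. a matched pair of odd reflections separated only by even reflections cancels. -/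
noncomputable section

/-- The composition `r_{δ₁−δ₂} ∘ ⋯ ∘ r_{δ_{k−1}−δ_k}` of even reflections along the
chain `d 0, d 1, …, d (k−1)` of `δ`-indices. -/
def evenChainS (m n k : ℕ) (d : ℕ → Fin m) : ((Fin m ⊕ Fin n) → ℝ) → (Fin m ⊕ Fin n) → ℝ :=
  (List.range (k - 1)).foldr
    (fun i f => fun μ =>
      evenReflS m n (wtS m n (Sum.inl (d i)) - wtS m n (Sum.inl (d (i + 1)))) (f μ))
    id

namespace Stmt10Aux

lemma wformS_sub_left (m n : ℕ) (v w μ : (Fin m ⊕ Fin n) → ℝ) :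
    wformS m n (v - w) μ = wformS m n v μ - wformS m n w μ := by
  simp only [wformS, Pi.sub_apply, sub_mul, Finset.sum_sub_distrib]
  ring

lemma wformS_sub_right (m n : ℕ) (α μ ν : (Fin m ⊕ Fin n) → ℝ) :
    wformS m n α (μ - ν) = wformS m n α μ - wformS m n α ν := by
  simp only [wformS, Pi.sub_apply, mul_sub, Finset.sum_sub_distrib]
  ring

lemma wformS_inl (m n : ℕ) (i : Fin m) (μ : (Fin m ⊕ Fin n) → ℝ) :
    wformS m n (wtS m n (Sum.inl i)) μ = μ (Sum.inl i) := by
  simp [wformS, wtS, Pi.single_apply]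

lemma wformS_inr (m n : ℕ) (j : Fin n) (μ : (Fin m ⊕ Fin n) → ℝ) :
    wformS m n (wtS m n (Sum.inr j)) μ = -μ (Sum.inr j) := by
  simp [wformS, wtS, Pi.single_apply]

lemma wform_de (m n : ℕ) (a : Fin m) (j : Fin n) (μ : (Fin m ⊕ Fin n) → ℝ) :
    wformS m n (wtS m n (Sum.inl a) - wtS m n (Sum.inr j)) μ
      = μ (Sum.inl a) + μ (Sum.inr j) := by
  rw [wformS_sub_left, wformS_inl, wformS_inr]; ring

lemma wform_ed (m n : ℕ) (a : Fin m) (j : Fin n) (μ : (Fin m ⊕ Fin n) → ℝ) :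
    wformS m n (wtS m n (Sum.inr j) - wtS m n (Sum.inl a)) μ
      = -(μ (Sum.inl a) + μ (Sum.inr j)) := by
  rw [wformS_sub_left, wformS_inr, wformS_inl]; ring

lemma evenReflS_dd_apply (m n : ℕ) (a b : Fin m) (hab : a ≠ b)
    (μ : (Fin m ⊕ Fin n) → ℝ) (x : Fin m ⊕ Fin n) :
    evenReflS m n (wtS m n (Sum.inl a) - wtS m n (Sum.inl b)) μ x
      = μ (Equiv.swap (Sum.inl a) (Sum.inl b) x) := by
  have hq : wformS m n (wtS m n (Sum.inl a) - wtS m n (Sum.inl b))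
      (wtS m n (Sum.inl a) - wtS m n (Sum.inl b)) = 2 := by
    rw [wformS_sub_left, wformS_inl, wformS_inl]
    simp [wtS, Pi.single_apply, hab, hab.symm]
    norm_num
  have hc : wformS m n (wtS m n (Sum.inl a) - wtS m n (Sum.inl b)) μ
      = μ (Sum.inl a) - μ (Sum.inl b) := by
    rw [wformS_sub_left, wformS_inl, wformS_inl]
  simp only [evenReflS, hq, hc, Pi.sub_apply, Pi.smul_apply, smul_eq_mul]
  rcases x with i | j
  · by_cases hia : i = a
    · subst hia
      rw [Equiv.swap_apply_left]
      simp [wtS, Pi.single_apply, hab, hab.symm]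
    · by_cases hib : i = b
      · subst hib
        rw [Equiv.swap_apply_right]
        simp [wtS, Pi.single_apply, hab, hab.symm]
      · rw [Equiv.swap_apply_of_ne_of_ne (by simp [hia]) (by simp [hib])]
        simp [wtS, Pi.single_apply, hia, hib]
  · rw [Equiv.swap_apply_of_ne_of_ne (by simp) (by simp)]
    simp [wtS, Pi.single_apply]

lemma evenReflS_sub (m n : ℕ) (α μ ν : (Fin m ⊕ Fin n) → ℝ) (x : Fin m ⊕ Fin n) :
    evenReflS m n α (μ - ν) x = evenReflS m n α μ x - evenReflS m n α ν x := by
  simp only [evenReflS, wformS_sub_right, Pi.sub_apply, Pi.smul_apply, smul_eq_mul]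
  ring

lemma evenReflS_dd_inr (m n : ℕ) (a b : Fin m) (μ : (Fin m ⊕ Fin n) → ℝ) (j : Fin n) :
    evenReflS m n (wtS m n (Sum.inl a) - wtS m n (Sum.inl b)) μ (Sum.inr j)
      = μ (Sum.inr j) := by
  simp [evenReflS, wtS, Pi.single_apply]

lemma evenReflS_eps (m n : ℕ) (a b : Fin m) (j : Fin n) :
    evenReflS m n (wtS m n (Sum.inl a) - wtS m n (Sum.inl b)) (wtS m n (Sum.inr j))
      = wtS m n (Sum.inr j) := by
  have h0 : wformS m n (wtS m n (Sum.inl a) - wtS m n (Sum.inl b)) (wtS m n (Sum.inr j)) = 0 := by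
    rw [wformS_sub_left, wformS_inl, wformS_inl]
    simp [wtS, Pi.single_apply]
  simp [evenReflS, h0]

lemma evenReflS_root (m n : ℕ) (a b : Fin m) (hab : a ≠ b) :
    evenReflS m n (wtS m n (Sum.inl a) - wtS m n (Sum.inl b)) (wtS m n (Sum.inl b))
      = wtS m n (Sum.inl a) := by
  funext x
  rw [evenReflS_dd_apply m n a b hab]
  rcases x with i | j
  · by_cases hia : i = a
    · subst hia
      rw [Equiv.swap_apply_left]
      simp [wtS, Pi.single_apply]
    · by_cases hib : i = b
      · subst hib
        rw [Equiv.swap_apply_right]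
        simp [wtS, Pi.single_apply, hab.symm]
      · rw [Equiv.swap_apply_of_ne_of_ne (by simp [hia]) (by simp [hib])]
        simp [wtS, Pi.single_apply, hia, hib]
  · rw [Equiv.swap_apply_of_ne_of_ne (by simp) (by simp)]
    simp [wtS, Pi.single_apply]

lemma foldr_shift (m n : ℕ) (g : ℕ → ((Fin m ⊕ Fin n) → ℝ) → ((Fin m ⊕ Fin n) → ℝ))
    (l : List ℕ) (init : ((Fin m ⊕ Fin n) → ℝ) → ((Fin m ⊕ Fin n) → ℝ))
    (μ : (Fin m ⊕ Fin n) → ℝ) :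
    (l.foldr (fun i f μ => g i (f μ)) init) μ
      = (l.foldr (fun i f μ => g i (f μ)) id) (init μ) := by
  induction l with
  | nil => rfl
  | cons a l ih => simp only [List.foldr_cons]; rw [ih]

lemma evenChainS_succ (m n : ℕ) (k : ℕ) (d : ℕ → Fin m) (μ : (Fin m ⊕ Fin n) → ℝ) :
    evenChainS m n (k + 2) d μ
      = evenChainS m n (k + 1) d
          (evenReflS m n (wtS m n (Sum.inl (d k)) - wtS m n (Sum.inl (d (k + 1)))) μ) := by
  show (List.range (k + 1)).foldr _ id μ = (List.range k).foldr _ id _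
  rw [List.range_succ, List.foldr_append]
  rw [foldr_shift]
  rfl

lemma chain_inr (m n : ℕ) (k : ℕ) (d : ℕ → Fin m) (μ : (Fin m ⊕ Fin n) → ℝ) (j : Fin n) :
    evenChainS m n k d μ (Sum.inr j) = μ (Sum.inr j) := by
  induction k generalizing μ with
  | zero => rfl
  | succ k ih =>
    cases k with
    | zero => rfl
    | succ k =>
      rw [evenChainS_succ, ih, evenReflS_dd_inr]

lemma chain_sub (m n : ℕ) (k : ℕ) (d : ℕ → Fin m) (μ ν : (Fin m ⊕ Fin n) → ℝ) :
    evenChainS m n k d (μ - ν) = evenChainS m n k d μ - evenChainS m n k d ν := by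
  induction k generalizing μ ν with
  | zero => rfl
  | succ k ih =>
    cases k with
    | zero => rfl
    | succ k =>
      rw [evenChainS_succ, evenChainS_succ, evenChainS_succ]
      have hR : evenReflS m n (wtS m n (Sum.inl (d k)) - wtS m n (Sum.inl (d (k + 1)))) (μ - ν)
          = evenReflS m n (wtS m n (Sum.inl (d k)) - wtS m n (Sum.inl (d (k + 1)))) μ
            - evenReflS m n (wtS m n (Sum.inl (d k)) - wtS m n (Sum.inl (d (k + 1)))) ν :=
        funext fun x => evenReflS_sub m n _ μ ν x
      rw [hR, ih]

lemma chain_d0 (m n : ℕ) (k : ℕ) (d : ℕ → Fin m) (hd : Set.InjOn d (Set.Iio (k + 1)))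
    (μ : (Fin m ⊕ Fin n) → ℝ) :
    evenChainS m n (k + 1) d μ (Sum.inl (d 0)) = μ (Sum.inl (d k)) := by
  induction k generalizing μ with
  | zero => rfl
  | succ k ih =>
    have hne : d k ≠ d (k + 1) := by
      intro h
      have := hd (show k ∈ Set.Iio (k + 2) by simp)
        (show k + 1 ∈ Set.Iio (k + 2) by simp) h
      omega
    rw [evenChainS_succ, ih (hd.mono (Set.Iio_subset_Iio (by omega)))]
    rw [evenReflS_dd_apply m n _ _ hne, Equiv.swap_apply_left]

lemma chain_root (m n : ℕ) (k : ℕ) (d : ℕ → Fin m) (hd : Set.InjOn d (Set.Iio (k + 1))) :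
    evenChainS m n (k + 1) d (wtS m n (Sum.inl (d k))) = wtS m n (Sum.inl (d 0)) := by
  induction k with
  | zero => rfl
  | succ k ih =>
    have hne : d k ≠ d (k + 1) := by
      intro h
      have := hd (show k ∈ Set.Iio (k + 2) by simp)
        (show k + 1 ∈ Set.Iio (k + 2) by simp) h
      omega
    rw [evenChainS_succ, evenReflS_root m n _ _ hne,
      ih (hd.mono (Set.Iio_subset_Iio (by omega)))]

lemma chain_eps (m n : ℕ) (k : ℕ) (d : ℕ → Fin m) (j : Fin n) :
    evenChainS m n k d (wtS m n (Sum.inr j)) = wtS m n (Sum.inr j) := by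
  induction k with
  | zero => rfl
  | succ k ih =>
    cases k with
    | zero => rfl
    | succ k =>
      rw [evenChainS_succ, evenReflS_eps]
      exact ih

end Stmt10Aux

open Stmt10Aux in
/-- `r_{ε−δ} ∘ r_{δ−ε} = id` on weights, and more generally
`r_{ε−δ₁} ∘ r_{δ₁−δ₂} ∘ ⋯ ∘ r_{δ_{k−1}−δ_k} ∘ r_{δ_k−ε} = r_{δ₁−δ₂} ∘ ⋯ ∘ r_{δ_{k−1}−δ_k}`:
a matched pair of odd reflections separated only by even reflections cancels. -/
theorem stmt10 (m n : ℕ) (e : Fin n) (k : ℕ) (hk : 1 ≤ k) (d : ℕ → Fin m)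
    (hd : Set.InjOn d (Set.Iio k)) :
    (∀ (δi : Fin m) (lam : (Fin m ⊕ Fin n) → ℝ),
        oddReflS m n (wtS m n (Sum.inr e) - wtS m n (Sum.inl δi))
          (oddReflS m n (wtS m n (Sum.inl δi) - wtS m n (Sum.inr e)) lam) = lam) ∧
    (∀ lam : (Fin m ⊕ Fin n) → ℝ,
        oddReflS m n (wtS m n (Sum.inr e) - wtS m n (Sum.inl (d 0)))
          (evenChainS m n k d
            (oddReflS m n (wtS m n (Sum.inl (d (k - 1))) - wtS m n (Sum.inr e)) lam)) =
        evenChainS m n k d lam) := by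
  constructor
  · intro δi lam
    by_cases h : wformS m n (wtS m n (Sum.inl δi) - wtS m n (Sum.inr e)) lam = 0
    · have h0 : oddReflS m n (wtS m n (Sum.inl δi) - wtS m n (Sum.inr e)) lam = lam := by
        simp only [oddReflS]; rw [if_pos h]
      rw [h0]
      have h1 : wformS m n (wtS m n (Sum.inr e) - wtS m n (Sum.inl δi)) lam = 0 := by
        rw [wform_ed]; rw [wform_de] at h; linarith
      simp only [oddReflS]; rw [if_pos h1]
    · have h0 : oddReflS m n (wtS m n (Sum.inl δi) - wtS m n (Sum.inr e)) lam
          = lam - (wtS m n (Sum.inl δi) - wtS m n (Sum.inr e)) := by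
        simp only [oddReflS]; rw [if_neg h]
      rw [h0]
      rw [wform_de] at h
      have e1 : (lam - (wtS m n (Sum.inl δi) - wtS m n (Sum.inr e))) (Sum.inl δi)
          = lam (Sum.inl δi) - 1 := by simp [wtS, Pi.single_apply]
      have e2 : (lam - (wtS m n (Sum.inl δi) - wtS m n (Sum.inr e))) (Sum.inr e)
          = lam (Sum.inr e) + 1 := by simp [wtS, Pi.single_apply]
      have h1 : wformS m n (wtS m n (Sum.inr e) - wtS m n (Sum.inl δi))
          (lam - (wtS m n (Sum.inl δi) - wtS m n (Sum.inr e))) ≠ 0 := by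
        rw [wform_ed, e1, e2]
        intro hc; apply h; linarith
      simp only [oddReflS]; rw [if_neg h1]
      abel
  · intro lam
    obtain ⟨k', rfl⟩ : ∃ k', k = k' + 1 := ⟨k - 1, by omega⟩
    simp only [Nat.add_sub_cancel]
    by_cases h : wformS m n (wtS m n (Sum.inl (d k')) - wtS m n (Sum.inr e)) lam = 0
    · have h0 : oddReflS m n (wtS m n (Sum.inl (d k')) - wtS m n (Sum.inr e)) lam = lam := by
        simp only [oddReflS]; rw [if_pos h]
      rw [h0]
      rw [wform_de] at h
      have h1 : wformS m n (wtS m n (Sum.inr e) - wtS m n (Sum.inl (d 0)))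
          (evenChainS m n (k' + 1) d lam) = 0 := by
        rw [wform_ed, chain_d0 m n k' d hd, chain_inr]
        linarith
      simp only [oddReflS]; rw [if_pos h1]
    · have h0 : oddReflS m n (wtS m n (Sum.inl (d k')) - wtS m n (Sum.inr e)) lam
          = lam - (wtS m n (Sum.inl (d k')) - wtS m n (Sum.inr e)) := by
        simp only [oddReflS]; rw [if_neg h]
      rw [h0]
      rw [wform_de] at h
      rw [chain_sub, chain_sub, chain_root m n k' d hd, chain_eps]
      have e1 : (evenChainS m n (k' + 1) d lam
            - (wtS m n (Sum.inl (d 0)) - wtS m n (Sum.inr e))) (Sum.inl (d 0))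
          = lam (Sum.inl (d k')) - 1 := by
        simp only [Pi.sub_apply]
        rw [chain_d0 m n k' d hd]
        simp [wtS, Pi.single_apply]
      have e2 : (evenChainS m n (k' + 1) d lam
            - (wtS m n (Sum.inl (d 0)) - wtS m n (Sum.inr e))) (Sum.inr e)
          = lam (Sum.inr e) + 1 := by
        simp only [Pi.sub_apply]
        rw [chain_inr]
        simp [wtS, Pi.single_apply]
      have h1 : wformS m n (wtS m n (Sum.inr e) - wtS m n (Sum.inl (d 0)))
          (evenChainS m n (k' + 1) d lam
            - (wtS m n (Sum.inl (d 0)) - wtS m n (Sum.inr e))) ≠ 0 := by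
        rw [wform_ed, e1, e2]
        intro hc; apply h; linarith
      simp only [oddReflS]; rw [if_neg h1]
      abel
end
end

section
/- Let ξ₁,…,ξ_q, η₁,…,η_q, ξ̄₁,…,ξ̄_q, η̄₁,…,η̄_q be odd generators of a Grassmann algebra, λ ∈ ℂ, and consider the Berezin integral c(λ) = ∏_{i=1}^q ∫ D(ξ_i, η_i) (1 − 2λ ξ_i η_i) where ∫ D(ξ,η) extracts the coefficient of ξη. Then c(λ) = (−2)^q λ^q. In particular, the rank-one c-function integral at an isotropic restricted root α with m_α = −2q equals (−2)^q ⟨λ, α⟩^q, a polynomial vanishing exactly at ⟨λ, α⟩ = 0. -/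
noncomputable def gen (k : ℕ) : ExteriorAlgebra ℂ (ℕ → ℂ) :=
  ExteriorAlgebra.ι ℂ (Pi.single k (1 : ℂ))

noncomputable def MM (s : Finset ℕ) : ExteriorAlgebra ℂ (ℕ → ℂ) :=
  ((s.sort (· ≤ ·)).map gen).prod

lemma sort_insert_max {a : ℕ} {s : Finset ℕ} (h : ∀ b ∈ s, b < a) :
    (insert a s).sort (· ≤ ·) = s.sort (· ≤ ·) ++ [a] := by
  have ha : a ∉ s := fun hm => lt_irrefl a (h a hm)
  refine (fun hp hs => List.Perm.eq_of_pairwise' (Finset.pairwise_sort _ _) hs hp) ?_ ?_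
  · rw [← Multiset.coe_eq_coe]
    simp only [Finset.sort_eq, Finset.insert_val, Multiset.ndinsert_of_notMem ha,
      ← Multiset.coe_singleton, ← Multiset.coe_add]
    rw [add_comm, ← Multiset.singleton_add, Multiset.singleton_add, Multiset.coe_singleton]
    rfl
  · rw [List.pairwise_append]
    refine ⟨Finset.pairwise_sort _ _, List.pairwise_singleton _ a, ?_⟩
    intro x hx y hy
    simp at hy; subst hy
    exact (h x (by simpa using (Finset.mem_sort (α := ℕ) (· ≤ ·)).mp hx)).le

lemma MM_insert_max {a : ℕ} {s : Finset ℕ} (h : ∀ b ∈ s, b < a) :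
    MM (insert a s) = MM s * gen a := by
  rw [MM, sort_insert_max h, List.map_append, List.prod_append]
  simp [MM]

def DD (s : Finset ℕ) : Finset ℕ := s.image (fun i => 2 * i) ∪ s.image (fun i => 2 * i + 1)

lemma mem_DD {s : Finset ℕ} {k : ℕ} :
    k ∈ DD s ↔ (∃ i ∈ s, 2 * i = k) ∨ (∃ i ∈ s, 2 * i + 1 = k) := by
  simp [DD]

lemma DD_lt {s : Finset ℕ} {n : ℕ} (hs : s ⊆ Finset.range n) :
    ∀ b ∈ DD s, b < 2 * n := by
  intro b hb
  rcases mem_DD.mp hb with ⟨i, hi, rfl⟩ | ⟨i, hi, rfl⟩ <;>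
    have := Finset.mem_range.mp (hs hi) <;> omega

lemma DD_insert {s : Finset ℕ} {n : ℕ} :
    DD (insert n s) = insert (2 * n + 1) (insert (2 * n) (DD s)) := by
  ext k
  simp only [mem_DD, Finset.mem_insert]
  constructor
  · rintro (⟨i, hi | hi, rfl⟩ | ⟨i, hi | hi, rfl⟩)
    · right; left; omega
    · right; right; exact (Or.inl ⟨i, hi, rfl⟩)
    · left; omega
    · right; right; exact (Or.inr ⟨i, hi, rfl⟩)
  · rintro (rfl | rfl | hk)
    · exact Or.inr ⟨n, Or.inl rfl, rfl⟩
    · exact Or.inl ⟨n, Or.inl rfl, rfl⟩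
    · rcases hk with ⟨i, hi, rfl⟩ | ⟨i, hi, rfl⟩
      · exact Or.inl ⟨i, Or.inr hi, rfl⟩
      · exact Or.inr ⟨i, Or.inr hi, rfl⟩

lemma MM_DD_insert {s : Finset ℕ} {n : ℕ} (hs : s ⊆ Finset.range n) :
    MM (DD (insert n s)) = MM (DD s) * gen (2 * n) * gen (2 * n + 1) := by
  rw [DD_insert, MM_insert_max, MM_insert_max (DD_lt hs)]
  intro b hb
  rcases Finset.mem_insert.mp hb with rfl | hb
  · omega
  · have := DD_lt hs b hb; omega

lemma key_expand (c : ℂ) (n : ℕ) :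
    (((List.range n).map fun i =>
        (1 : ExteriorAlgebra ℂ (ℕ → ℂ)) + c • (gen (2 * i) * gen (2 * i + 1))).prod) =
      ∑ s ∈ (Finset.range n).powerset, c ^ s.card • MM (DD s) := by
  induction n with
  | zero => simp [MM, DD]
  | succ n ih =>
      rw [List.range_succ, List.map_append, List.prod_append, ih]
      rw [Finset.range_add_one, Finset.sum_powerset_insert (by simp)]
      simp only [List.map_singleton, List.prod_singleton]
      rw [mul_add, mul_one, Finset.sum_mul]
      congr 1
      refine Finset.sum_congr rfl fun s hs => ?_
      have hs' : s ⊆ Finset.range n := Finset.mem_powerset.mp hs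
      have hns : n ∉ s := fun h => by simpa using Finset.mem_range.mp (hs' h)
      rw [Finset.card_insert_of_notMem hns, MM_DD_insert hs']
      rw [smul_mul_assoc, mul_smul_comm, smul_smul, pow_succ, mul_assoc]

lemma DD_range (q : ℕ) : DD (Finset.range q) = Finset.range (2 * q) := by
  ext k
  rw [mem_DD]
  simp only [Finset.mem_range]
  constructor
  · rintro (⟨i, hi, rfl⟩ | ⟨i, hi, rfl⟩) <;> omega
  · intro hk
    rcases Nat.even_or_odd k with ⟨m, rfl⟩ | ⟨m, rfl⟩
    · exact Or.inl ⟨m, by omega, by omega⟩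
    · exact Or.inr ⟨m, by omega, by omega⟩

lemma DD_eq_range {q : ℕ} {s : Finset ℕ} (hs : s ⊆ Finset.range q)
    (h : DD s = Finset.range (2 * q)) : s = Finset.range q := by
  refine Finset.Subset.antisymm hs fun i hi => ?_
  have hi' := Finset.mem_range.mp hi
  have : 2 * i ∈ DD s := by rw [h]; exact Finset.mem_range.mpr (by omega)
  rcases mem_DD.mp this with ⟨j, hj, hje⟩ | ⟨j, hj, hje⟩
  · have : j = i := by omega
    subst this; exact hj
  · omega


/-- the Berezin integral
`c(λ) = ∏_{i=1}^q ∫ D(ξ_i,η_i) (1 − 2λ ξ_i η_i)` equals `(−2)^q λ^q`.  The Grassmann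
algebra is realised as the exterior algebra on generators `e_k = ι(single k 1)`, with
`ξ_i = e_{2i}`, `η_i = e_{2i+1}`, and the Berezin integral is any linear functional
extracting the coefficient of the top product `e_0 ⋯ e_{2q−1}`.  In particular this
polynomial in `λ` vanishes exactly at `λ = 0` (for `q > 0`). -/
theorem stmt16 (q : ℕ) (lam : ℂ)
    (Ber : ExteriorAlgebra ℂ (ℕ → ℂ) →ₗ[ℂ] ℂ)
    (htop : Ber (((List.range (2 * q)).map fun k =>
        ExteriorAlgebra.ι ℂ (Pi.single k (1 : ℂ))).prod) = 1)
    (hlow : ∀ s : Finset ℕ, ↑s ⊆ Set.Iio (2 * q) → s ≠ Finset.range (2 * q) →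
        Ber (((s.sort (· ≤ ·)).map fun k =>
          ExteriorAlgebra.ι ℂ (Pi.single k (1 : ℂ))).prod) = 0) :
    Ber (((List.range q).map fun i =>
        (1 : ExteriorAlgebra ℂ (ℕ → ℂ)) -
          (2 * lam) • (ExteriorAlgebra.ι ℂ (Pi.single (2 * i) (1 : ℂ)) *
            ExteriorAlgebra.ι ℂ (Pi.single (2 * i + 1) (1 : ℂ)))).prod) =
      (-2 : ℂ) ^ q * lam ^ q ∧
    ((-2 : ℂ) ^ q * lam ^ q = 0 ↔ 0 < q ∧ lam = 0) := by
  constructor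
  · have hfac : (((List.range q).map fun i =>
        (1 : ExteriorAlgebra ℂ (ℕ → ℂ)) -
          (2 * lam) • (ExteriorAlgebra.ι ℂ (Pi.single (2 * i) (1 : ℂ)) *
            ExteriorAlgebra.ι ℂ (Pi.single (2 * i + 1) (1 : ℂ)))).prod) =
        (((List.range q).map fun i =>
          (1 : ExteriorAlgebra ℂ (ℕ → ℂ)) +
            (-(2 * lam)) • (gen (2 * i) * gen (2 * i + 1))).prod) := by
      congr 1
      refine List.map_congr_left fun i _ => ?_
      rw [sub_eq_add_neg, neg_smul]
      rfl
    rw [hfac, key_expand, map_sum]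
    have hmem : Finset.range q ∈ (Finset.range q).powerset := Finset.mem_powerset_self _
    rw [Finset.sum_eq_single_of_mem _ hmem]
    · rw [map_smul, DD_range, Finset.card_range, MM]
      rw [Finset.sort_range]
      have : Ber ((List.map gen (List.range (2 * q))).prod) = 1 := htop
      rw [this, smul_eq_mul, mul_one]
      rw [show -(2 * lam) = (-2) * lam by ring, mul_pow]
    · intro s hs hne
      have hs' : s ⊆ Finset.range q := Finset.mem_powerset.mp hs
      rw [map_smul]
      have h1 : ↑(DD s) ⊆ Set.Iio (2 * q) := fun b hb => DD_lt hs' b hb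
      have h2 : DD s ≠ Finset.range (2 * q) := fun h => hne (DD_eq_range hs' h)
      have hz := hlow (DD s) h1 h2
      rw [MM]
      unfold gen
      rw [hz, smul_zero]
  · constructor
    · intro h
      rcases mul_eq_zero.mp h with h2 | h2
      · exact absurd h2 (pow_ne_zero _ (by norm_num))
      · have hq : q ≠ 0 := by
          rintro rfl; simp at h2
        exact ⟨Nat.pos_of_ne_zero hq, pow_eq_zero_iff hq |>.mp h2⟩
    · rintro ⟨hq, rfl⟩
      simp [zero_pow hq.ne']
end
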